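/- Assume the network topology T is tree-like and let f°∈F(λ0) be an equilibrium flow. Then the quantity d_0 produced by the backward recursion satisfies R(f°) ≤ d_0 ≤ C − λ0, where R(f°) is the minimal node residual capacity and C is the min-cut capacity of the network. -/

import Mathlib

open Filter Set Topology MeasureTheory
open scoped BigOperators ENNReal

noncomputable section

/-- A flow network: a finite directed multigraph on node set `{0, 1, ..., n}`
(origin `0`, destination `n`) in which every link `e` satisfies `σ(e) < τ(e)`. -/
structure FlowNetwork where
  n : ℕ
  npos : 0 < n
  E : Type
  fintE : Fintype E
  decE : DecidableEq E
  /-- the tail node σ(e) -/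
  src : E → Fin (n + 1)
  /-- the head node τ(e) -/
  dst : E → Fin (n + 1)
  src_lt_dst : ∀ e, src e < dst e

attribute [instance] FlowNetwork.fintE FlowNetwork.decE

namespace FlowNetwork

variable (N : FlowNetwork)

def origin : Fin (N.n + 1) := 0

def destination : Fin (N.n + 1) := Fin.last N.n

/-- E⁺_v, the set of outgoing links of a node `v` -/
def outLinks (v : Fin (N.n + 1)) : Finset N.E :=
  Finset.univ.filter fun e => N.src e = v

/-- E⁻_v, the set of incoming links of a node `v` -/
def inLinks (v : Fin (N.n + 1)) : Finset N.E :=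
  Finset.univ.filter fun e => N.dst e = v

/-- `IsWalk p u w` : the list of links `p` forms a path leading from node `u` to node `w`. -/
def IsWalk : List N.E → Fin (N.n + 1) → Fin (N.n + 1) → Prop
  | [], u, w => u = w
  | e :: p, u, w => N.src e = u ∧ IsWalk p (N.dst e) w

/-- every node lies on a path from the origin to the destination -/
def Connected : Prop :=
  ∀ v, (∃ p, N.IsWalk p N.origin v) ∧ ∃ p, N.IsWalk p v N.destination

/-- tree-like topology: the only node reachable from the origin by two distinct paths
is the destination -/
def TreeLike : Prop :=
  ∀ v p q, N.IsWalk p N.origin v → N.IsWalk q N.origin v → p ≠ q → v = N.destination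

/-- `f ∈ F(λ0)`: the set of equilibrium flows for inflow `λ0`. -/
def IsEquilibriumFlow (fmax : N.E → ℝ) (lam0 : ℝ) (f : N.E → ℝ) : Prop :=
  (∀ e, f e ∈ Icc 0 (fmax e)) ∧
  (∑ e ∈ N.outLinks N.origin, f e = lam0) ∧
  ∀ v, v ≠ N.origin → v ≠ N.destination →
    ∑ e ∈ N.outLinks v, f e = ∑ e ∈ N.inLinks v, f e

/-- an origin-destination cut -/
def IsCut (U : Finset (Fin (N.n + 1))) : Prop := N.origin ∈ U ∧ N.destination ∉ U

/-- E⁺_U, the links with tail in `U` and head outside `U` -/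
def cutOutLinks (U : Finset (Fin (N.n + 1))) : Finset N.E :=
  Finset.univ.filter fun e => N.src e ∈ U ∧ N.dst e ∉ U

/-- E⁻_U, the links with tail outside `U` and head in `U` -/
def cutInLinks (U : Finset (Fin (N.n + 1))) : Finset N.E :=
  Finset.univ.filter fun e => N.src e ∉ U ∧ N.dst e ∈ U

/-- the capacity C(U) of a cut -/
def cutCapacity (fmax : N.E → ℝ) (U : Finset (Fin (N.n + 1))) : ℝ :=
  ∑ e ∈ N.cutOutLinks U, fmax e

/-- the min-cut capacity C of the network -/
def minCutCapacity (fmax : N.E → ℝ) : ℝ :=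
  sInf {c | ∃ U, N.IsCut U ∧ c = N.cutCapacity fmax U}

/-- the residual capacity R_v(f) of a node `v` -/
def residualCapacity (fmax f : N.E → ℝ) (v : Fin (N.n + 1)) : ℝ :=
  ∑ e ∈ N.outLinks v, (fmax e - f e)

/-- the minimal node residual capacity R(f) of the network -/
def minResidualCapacity (fmax f : N.E → ℝ) : ℝ :=
  sInf {r | ∃ v, v ≠ N.destination ∧ r = N.residualCapacity fmax f v}

/-- the set X_v(λ), viewed as vectors supported on E⁺_v -/
def Xset (fmax : N.E → ℝ) (v : Fin (N.n + 1)) (lam : ℝ) : Set (N.E → ℝ) :=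
  {x | (∀ e ∈ N.outLinks v, x e ∈ Icc 0 (fmax e)) ∧ (∀ e ∉ N.outLinks v, x e = 0) ∧
    ∑ e ∈ N.outLinks v, (fmax e - x e) ≤ lam}

/-- the cost c_v(x) = Σ_{e ∈ E⁺_v} min{x_e, d_{τ(e)}}, valued in `[0,∞]`
(with the convention `min{x, +∞} = x`) -/
def cval (d : Fin (N.n + 1) → ℝ≥0∞) (v : Fin (N.n + 1)) (x : N.E → ℝ) : ℝ≥0∞ :=
  ∑ e ∈ N.outLinks v, min (ENNReal.ofReal (x e)) (d (N.dst e))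

/-- `d` is the backward recursion: `d_n = +∞` and
`d_v = min { c_v(x) : x ∈ X_v(λ°_v) }` for `v < n`, where `λ°_v = Σ_{e ∈ E⁺_v} f°_e`. -/
def IsBackwardRecursion (fmax f : N.E → ℝ) (d : Fin (N.n + 1) → ℝ≥0∞) : Prop :=
  d N.destination = ⊤ ∧
  ∀ v, v ≠ N.destination →
    d v = sInf (N.cval d v '' N.Xset fmax v (∑ e ∈ N.outLinks v, f e))

end FlowNetwork

end


noncomputable section

namespace FlowNetwork

variable (N : FlowNetwork)

/-- reachability by a walk -/
def Reach (u w : Fin (N.n + 1)) : Prop := ∃ p, N.IsWalk p u w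

lemma mem_outLinks {e : N.E} {v : Fin (N.n + 1)} : e ∈ N.outLinks v ↔ N.src e = v := by
  simp [outLinks]

lemma mem_inLinks {e : N.E} {v : Fin (N.n + 1)} : e ∈ N.inLinks v ↔ N.dst e = v := by
  simp [inLinks]

lemma isWalk_le : ∀ (p : List N.E) (u w : Fin (N.n + 1)), N.IsWalk p u w → u ≤ w := by
  intro p
  induction p with
  | nil => intro u w h; exact le_of_eq h
  | cons e q ih =>
    intro u w h
    obtain ⟨h1, h2⟩ := h
    calc u = N.src e := h1.symm
      _ ≤ N.dst e := (N.src_lt_dst e).le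
      _ ≤ w := ih _ _ h2

lemma isWalk_append : ∀ (p q : List N.E) (u v w : Fin (N.n + 1)),
    N.IsWalk p u v → N.IsWalk q v w → N.IsWalk (p ++ q) u w := by
  intro p
  induction p with
  | nil => intro q u v w h1 h2; cases h1; exact h2
  | cons e p ih =>
    intro q u v w h1 h2
    exact ⟨h1.1, ih _ _ _ _ h1.2 h2⟩

lemma reach_le {u w : Fin (N.n + 1)} (h : N.Reach u w) : u ≤ w := by
  obtain ⟨p, hp⟩ := h
  exact N.isWalk_le p u w hp

lemma reach_refl (u : Fin (N.n + 1)) : N.Reach u u := ⟨[], rfl⟩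

lemma reach_step {u w : Fin (N.n + 1)} (e : N.E) (he : N.src e = u)
    (h : N.Reach (N.dst e) w) : N.Reach u w := by
  obtain ⟨p, hp⟩ := h
  exact ⟨e :: p, he, hp⟩

/-- tree-like separation: two distinct links out of a node (reachable from the origin)
cannot both reach the same non-destination node -/
lemma tree_sep (hconn : N.Connected) (htree : N.TreeLike) {v : Fin (N.n + 1)}
    {e1 e2 : N.E} (he1 : N.src e1 = v) (he2 : N.src e2 = v) (hne : e1 ≠ e2)
    {w : Fin (N.n + 1)} (hw : w ≠ N.destination)
    (h1 : N.Reach (N.dst e1) w) (h2 : N.Reach (N.dst e2) w) : False := by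
  obtain ⟨p0, hp0⟩ := (hconn v).1
  obtain ⟨q1, hq1⟩ := h1
  obtain ⟨q2, hq2⟩ := h2
  have w1 : N.IsWalk (p0 ++ e1 :: q1) N.origin w := N.isWalk_append _ _ _ _ _ hp0 ⟨he1, hq1⟩
  have w2 : N.IsWalk (p0 ++ e2 :: q2) N.origin w := N.isWalk_append _ _ _ _ _ hp0 ⟨he2, hq2⟩
  have hnel : p0 ++ e1 :: q1 ≠ p0 ++ e2 :: q2 := by
    intro h
    have h' := List.append_cancel_left h
    exact hne (by injection h')
  exact hw (htree w _ _ w1 w2 hnel)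

lemma val_ne_n_of_ne_dest {v : Fin (N.n + 1)} (h : v ≠ N.destination) : v.val ≠ N.n := by
  intro hv
  exact h (Fin.ext (by simpa [destination] using hv))

/-- **Lower bound**: `R(f°) ≤ d_v` for every node. -/
lemma lower_bound (fmax f : N.E → ℝ) (hf0 : ∀ e, f e ∈ Set.Icc 0 (fmax e))
    (d : Fin (N.n + 1) → ℝ≥0∞) (hd : N.IsBackwardRecursion fmax f d) (v0 : Fin (N.n + 1)) :
    ENNReal.ofReal (N.minResidualCapacity fmax f) ≤ d v0 := by
  classical
  set R := N.minResidualCapacity fmax f with hRdef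
  have hres_nonneg : ∀ w, 0 ≤ N.residualCapacity fmax f w := by
    intro w
    exact Finset.sum_nonneg fun e _ => sub_nonneg.2 (hf0 e).2
  have horig_ne : N.origin ≠ N.destination := by
    intro h
    have := N.npos
    have h2 : (N.origin).val = (N.destination).val := by rw [h]
    simp [origin, destination, Fin.val_last] at h2
    omega
  have hbdd : BddBelow {r | ∃ v, v ≠ N.destination ∧ r = N.residualCapacity fmax f v} := by
    refine ⟨0, ?_⟩
    rintro r ⟨w, _, rfl⟩
    exact hres_nonneg w
  have hRnonneg : 0 ≤ R := by
    refine le_csInf ⟨N.residualCapacity fmax f N.origin, N.origin, horig_ne, rfl⟩ ?_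
    rintro r ⟨w, _, rfl⟩
    exact hres_nonneg w
  have hRle : ∀ w, w ≠ N.destination → R ≤ N.residualCapacity fmax f w := by
    intro w hw
    exact csInf_le hbdd ⟨w, hw, rfl⟩
  suffices H : ∀ (k : ℕ) (v : Fin (N.n + 1)), N.n - v.val ≤ k → ENNReal.ofReal R ≤ d v from
    H (N.n - v0.val) v0 le_rfl
  intro k
  induction k with
  | zero =>
    intro v hv
    have h1 : v.val ≤ N.n := Fin.is_le v
    have h2 : v = N.destination := Fin.ext (by simp [destination, Fin.val_last]; omega)
    rw [h2, hd.1]; exact le_top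
  | succ k ih =>
    intro v hv
    by_cases hvd : v = N.destination
    · rw [hvd, hd.1]; exact le_top
    · rw [hd.2 v hvd]
      refine le_sInf ?_
      rintro b ⟨x, hx, rfl⟩
      obtain ⟨hx1, hx2, hx3⟩ := hx
      have hdge : ∀ e ∈ N.outLinks v, ENNReal.ofReal R ≤ d (N.dst e) := by
        intro e he
        apply ih
        have hlt : v.val < (N.dst e).val := by
          have h := N.src_lt_dst e
          rw [N.mem_outLinks.1 he] at h
          exact h
        omega
      have hxnn : ∀ e ∈ N.outLinks v, 0 ≤ x e := fun e he => (hx1 e he).1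
      calc ENNReal.ofReal R
          ≤ ENNReal.ofReal (∑ e ∈ N.outLinks v, min (x e) R) := by
            apply ENNReal.ofReal_le_ofReal
            by_cases hc : ∀ e ∈ N.outLinks v, x e ≤ R
            · have : ∑ e ∈ N.outLinks v, min (x e) R = ∑ e ∈ N.outLinks v, x e :=
                Finset.sum_congr rfl fun e he => min_eq_left (hc e he)
              rw [this]
              have hsum : ∑ e ∈ N.outLinks v, (fmax e - x e) ≤ ∑ e ∈ N.outLinks v, f e := hx3
              have h1 : N.residualCapacity fmax f v ≤ ∑ e ∈ N.outLinks v, x e := by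
                unfold residualCapacity
                rw [Finset.sum_sub_distrib] at hsum ⊢
                linarith
              exact (hRle v hvd).trans h1
            · push_neg at hc
              obtain ⟨e0, he0, hxe0⟩ := hc
              calc R = min (x e0) R := (min_eq_right hxe0.le).symm
                _ ≤ ∑ e ∈ N.outLinks v, min (x e) R :=
                  Finset.single_le_sum (fun e he => le_min (hxnn e he) hRnonneg) he0
        _ = ∑ e ∈ N.outLinks v, ENNReal.ofReal (min (x e) R) :=
            ENNReal.ofReal_sum_of_nonneg fun e he => le_min (hxnn e he) hRnonneg
        _ ≤ ∑ e ∈ N.outLinks v, min (ENNReal.ofReal (x e)) (d (N.dst e)) := by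
            refine Finset.sum_le_sum fun e he => ?_
            have hmin : ENNReal.ofReal (min (x e) R)
                = min (ENNReal.ofReal (x e)) (ENNReal.ofReal R) := by
              rcases le_total (x e) R with h | h
              · rw [min_eq_left h, min_eq_left (ENNReal.ofReal_le_ofReal h)]
              · rw [min_eq_right h, min_eq_right (ENNReal.ofReal_le_ofReal h)]
            rw [hmin]
            exact min_le_min le_rfl (hdge e he)
        _ = N.cval d v x := rfl

open scoped Classical in
/-- **Upper bound induction**: for every node `v` in a cut `U`,
`d_v + λ°_v ≤` the capacity of the cut links reachable from `v`. -/
lemma upper_bound (hconn : N.Connected) (htree : N.TreeLike)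
    (fmax : N.E → ℝ) (hfmax : ∀ e, 0 < fmax e)
    (f : N.E → ℝ) (lam0 : ℝ) (hf : N.IsEquilibriumFlow fmax lam0 f)
    (d : Fin (N.n + 1) → ℝ≥0∞) (hd : N.IsBackwardRecursion fmax f d)
    (U : Finset (Fin (N.n + 1))) (hU : N.IsCut U) :
    ∀ v ∈ U, d v + ENNReal.ofReal (∑ e ∈ N.outLinks v, f e) ≤
      ENNReal.ofReal
        (∑ g ∈ (N.cutOutLinks U).filter (fun g => N.Reach v (N.src g)), fmax g) := by
  classical
  set S : Fin (N.n + 1) → Finset N.E :=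
    fun v => (N.cutOutLinks U).filter (fun g => N.Reach v (N.src g)) with hSdef
  have hfnn : ∀ e, 0 ≤ f e := fun e => (hf.1 e).1
  have hffm : ∀ e, f e ≤ fmax e := fun e => (hf.1 e).2
  suffices H : ∀ (k : ℕ) (v : Fin (N.n + 1)), N.n - v.val ≤ k → v ∈ U →
      d v + ENNReal.ofReal (∑ e ∈ N.outLinks v, f e) ≤
        ENNReal.ofReal (∑ g ∈ S v, fmax g) from
    fun v hv => H (N.n - v.val) v le_rfl hv
  intro k
  induction k with
  | zero =>
    intro v hv hvU
    exfalso
    have h1 : v.val ≤ N.n := Fin.is_le v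
    have h2 : v = N.destination := Fin.ext (by simp [destination, Fin.val_last]; omega)
    exact hU.2 (h2 ▸ hvU)
  | succ k ih =>
    intro v hv hvU
    have hvd : v ≠ N.destination := fun h => hU.2 (h ▸ hvU)
    set A : Finset N.E := (N.outLinks v).filter (fun e => N.dst e ∈ U) with hAdef
    set B : Finset N.E := (N.outLinks v).filter (fun e => N.dst e ∉ U) with hBdef
    -- the chosen routing vector
    set x : N.E → ℝ := fun e =>
      if e ∈ N.outLinks v then (if N.dst e ∈ U then fmax e else fmax e - f e) else 0 with hxdef
    have hxmem : x ∈ N.Xset fmax v (∑ e ∈ N.outLinks v, f e) := by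
      refine ⟨?_, ?_, ?_⟩
      · intro e he
        simp only [hxdef, if_pos he]
        by_cases h : N.dst e ∈ U
        · rw [if_pos h]; exact ⟨(hfmax e).le, le_rfl⟩
        · rw [if_neg h]
          exact ⟨sub_nonneg.2 (hffm e), by linarith [hfnn e]⟩
      · intro e he
        simp only [hxdef, if_neg he]
      · have : ∀ e ∈ N.outLinks v, fmax e - x e = if N.dst e ∉ U then f e else 0 := by
          intro e he
          simp only [hxdef, if_pos he]
          by_cases h : N.dst e ∈ U <;> simp [h]
        rw [Finset.sum_congr rfl this, Finset.sum_ite, Finset.sum_const_zero, add_zero]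
        refine Finset.sum_le_sum_of_subset_of_nonneg (Finset.filter_subset _ _)
          fun e he _ => hfnn e
    -- d v ≤ c_v(x)
    have hdv : d v ≤ N.cval d v x := by
      rw [hd.2 v hvd]
      exact sInf_le ⟨x, hxmem, rfl⟩
    -- split the cost along A and B
    have hsplit : N.cval d v x ≤
        (∑ e ∈ A, d (N.dst e)) + ∑ e ∈ B, ENNReal.ofReal (fmax e - f e) := by
      unfold cval
      rw [← Finset.sum_filter_add_sum_filter_not (N.outLinks v) (fun e => N.dst e ∈ U)]
      refine add_le_add (Finset.sum_le_sum fun e he => min_le_right _ _)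
        (Finset.sum_le_sum fun e he => ?_)
      have he1 : e ∈ N.outLinks v := (Finset.mem_filter.1 he).1
      have he2 : N.dst e ∉ U := (Finset.mem_filter.1 he).2
      calc min (ENNReal.ofReal (x e)) (d (N.dst e)) ≤ ENNReal.ofReal (x e) := min_le_left _ _
        _ = ENNReal.ofReal (fmax e - f e) := by
            simp only [hxdef, if_pos he1, if_neg he2]
    -- the inflow splits along A and B as well
    have hlam : ENNReal.ofReal (∑ e ∈ N.outLinks v, f e) =
        (∑ e ∈ A, ENNReal.ofReal (f e)) + ∑ e ∈ B, ENNReal.ofReal (f e) := by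
      rw [ENNReal.ofReal_sum_of_nonneg fun e _ => hfnn e,
        ← Finset.sum_filter_add_sum_filter_not (N.outLinks v) (fun e => N.dst e ∈ U)]
    -- bound for A-terms via the induction hypothesis
    have hAbound : ∀ e ∈ A, d (N.dst e) + ENNReal.ofReal (f e) ≤
        ENNReal.ofReal (∑ g ∈ S (N.dst e), fmax g) := by
      intro e he
      have he1 : e ∈ N.outLinks v := (Finset.mem_filter.1 he).1
      have he2 : N.dst e ∈ U := (Finset.mem_filter.1 he).2
      have hsrc : N.src e = v := N.mem_outLinks.1 he1
      have hlt : v.val < (N.dst e).val := by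
        have h := N.src_lt_dst e; rw [hsrc] at h; exact h
      have hne_orig : N.dst e ≠ N.origin := by
        intro h
        have : (N.dst e).val = 0 := by rw [h]; rfl
        omega
      have hne_dest : N.dst e ≠ N.destination := fun h => hU.2 (h ▸ he2)
      -- f e ≤ λ°_{dst e}
      have hfe : f e ≤ ∑ e' ∈ N.outLinks (N.dst e), f e' := by
        rw [hf.2.2 (N.dst e) hne_orig hne_dest]
        exact Finset.single_le_sum (fun e' _ => hfnn e') (N.mem_inLinks.2 rfl)
      calc d (N.dst e) + ENNReal.ofReal (f e)
          ≤ d (N.dst e) + ENNReal.ofReal (∑ e' ∈ N.outLinks (N.dst e), f e') :=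
            add_le_add_right (ENNReal.ofReal_le_ofReal hfe) _
        _ ≤ ENNReal.ofReal (∑ g ∈ S (N.dst e), fmax g) := ih (N.dst e) (by omega) he2
    -- combinatorial inequality: disjoint subtrees
    have hcomb : (∑ e ∈ A, ∑ g ∈ S (N.dst e), fmax g) + ∑ e ∈ B, fmax e ≤
        ∑ g ∈ S v, fmax g := by
      have hpair : (↑A : Set N.E).PairwiseDisjoint (fun e => S (N.dst e)) := by
        intro e1 h1 e2 h2 hne
        simp only [Function.onFun]
        rw [Finset.disjoint_left]
        intro g hg1 hg2
        have hg1' := Finset.mem_filter.1 hg1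
        have hg2' := Finset.mem_filter.1 hg2
        have hgcut := Finset.mem_filter.1 hg1'.1
        have hsrcU : N.src g ∈ U := hgcut.2.1
        have hsrc_ne : N.src g ≠ N.destination := fun h => hU.2 (h ▸ hsrcU)
        have hs1 : N.src e1 = v := N.mem_outLinks.1 (Finset.mem_filter.1 h1).1
        have hs2 : N.src e2 = v := N.mem_outLinks.1 (Finset.mem_filter.1 h2).1
        exact N.tree_sep hconn htree hs1 hs2 hne hsrc_ne hg1'.2 hg2'.2
      have hsum_bi : ∑ e ∈ A, ∑ g ∈ S (N.dst e), fmax g =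
          ∑ g ∈ A.biUnion (fun e => S (N.dst e)), fmax g :=
        (Finset.sum_biUnion hpair).symm
      have hBsub : B ⊆ S v := by
        intro g hg
        have hg1 : g ∈ N.outLinks v := (Finset.mem_filter.1 hg).1
        have hg2 : N.dst g ∉ U := (Finset.mem_filter.1 hg).2
        have hsrc : N.src g = v := N.mem_outLinks.1 hg1
        refine Finset.mem_filter.2 ⟨Finset.mem_filter.2 ⟨Finset.mem_univ _, ?_, hg2⟩, ?_⟩
        · rw [hsrc]; exact hvU
        · rw [hsrc]; exact N.reach_refl v
      have hTsub : A.biUnion (fun e => S (N.dst e)) ⊆ S v := by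
        intro g hg
        obtain ⟨e, he, hge⟩ := Finset.mem_biUnion.1 hg
        have hge' := Finset.mem_filter.1 hge
        have hsrc : N.src e = v := N.mem_outLinks.1 (Finset.mem_filter.1 he).1
        exact Finset.mem_filter.2 ⟨hge'.1, N.reach_step e hsrc hge'.2⟩
      have hdisjBT : Disjoint (A.biUnion (fun e => S (N.dst e))) B := by
        rw [Finset.disjoint_left]
        intro g hg hgB
        obtain ⟨e, he, hge⟩ := Finset.mem_biUnion.1 hg
        have hreach : N.Reach (N.dst e) (N.src g) := (Finset.mem_filter.1 hge).2
        have hsrcg : N.src g = v := N.mem_outLinks.1 (Finset.mem_filter.1 hgB).1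
        have hsrce : N.src e = v := N.mem_outLinks.1 (Finset.mem_filter.1 he).1
        have h1 : N.dst e ≤ N.src g := N.reach_le hreach
        have h2 : v < N.dst e := by have h := N.src_lt_dst e; rwa [hsrce] at h
        rw [hsrcg] at h1
        exact absurd h1 (not_le.2 h2)
      calc (∑ e ∈ A, ∑ g ∈ S (N.dst e), fmax g) + ∑ e ∈ B, fmax e
          = ∑ g ∈ A.biUnion (fun e => S (N.dst e)) ∪ B, fmax g := by
            rw [hsum_bi, ← Finset.sum_union hdisjBT]
        _ ≤ ∑ g ∈ S v, fmax g := by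
            refine Finset.sum_le_sum_of_subset_of_nonneg ?_ (fun g _ _ => (hfmax g).le)
            exact Finset.union_subset hTsub hBsub
    -- put everything together
    calc d v + ENNReal.ofReal (∑ e ∈ N.outLinks v, f e)
        ≤ ((∑ e ∈ A, d (N.dst e)) + ∑ e ∈ B, ENNReal.ofReal (fmax e - f e)) +
            ((∑ e ∈ A, ENNReal.ofReal (f e)) + ∑ e ∈ B, ENNReal.ofReal (f e)) := by
          rw [hlam]
          exact add_le_add (hdv.trans hsplit) le_rfl
      _ = (∑ e ∈ A, (d (N.dst e) + ENNReal.ofReal (f e))) +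
            ∑ e ∈ B, (ENNReal.ofReal (fmax e - f e) + ENNReal.ofReal (f e)) := by
          rw [Finset.sum_add_distrib, Finset.sum_add_distrib]
          ring
      _ ≤ (∑ e ∈ A, ENNReal.ofReal (∑ g ∈ S (N.dst e), fmax g)) +
            ∑ e ∈ B, ENNReal.ofReal (fmax e) := by
          refine add_le_add (Finset.sum_le_sum hAbound)
            (Finset.sum_le_sum fun e he => le_of_eq ?_)
          rw [← ENNReal.ofReal_add (sub_nonneg.2 (hffm e)) (hfnn e), sub_add_cancel]
      _ = ENNReal.ofReal ((∑ e ∈ A, ∑ g ∈ S (N.dst e), fmax g) + ∑ e ∈ B, fmax e) := by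
          rw [ENNReal.ofReal_add (Finset.sum_nonneg fun e _ => Finset.sum_nonneg
              fun g _ => (hfmax g).le) (Finset.sum_nonneg fun e _ => (hfmax e).le),
            ENNReal.ofReal_sum_of_nonneg fun e _ => Finset.sum_nonneg fun g _ => (hfmax g).le,
            ENNReal.ofReal_sum_of_nonneg fun e _ => (hfmax e).le]
      _ ≤ ENNReal.ofReal (∑ g ∈ S v, fmax g) := ENNReal.ofReal_le_ofReal hcomb

end FlowNetwork

end


/-- **Proposition 2.** For a tree-like topology and an equilibrium flow `f° ∈ F(λ0)`,
the quantity `d_0` produced by the backward recursion satisfies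
`R(f°) ≤ d_0 ≤ C - λ0`. -/
theorem d0_bounds (N : FlowNetwork) (hconn : N.Connected) (htree : N.TreeLike)
    (fmax : N.E → ℝ) (hfmax : ∀ e, 0 < fmax e)
    (lam0 : ℝ) (hlam0 : 0 ≤ lam0)
    (f : N.E → ℝ) (hf : N.IsEquilibriumFlow fmax lam0 f)
    (d : Fin (N.n + 1) → ℝ≥0∞) (hd : N.IsBackwardRecursion fmax f d) :
    ENNReal.ofReal (N.minResidualCapacity fmax f) ≤ d N.origin ∧
      d N.origin ≤ ENNReal.ofReal (N.minCutCapacity fmax - lam0) := by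
  classical
  constructor
  · exact N.lower_bound fmax f hf.1 d hd N.origin
  · have hfin : {c | ∃ U, N.IsCut U ∧ c = N.cutCapacity fmax U}.Finite :=
      Set.Finite.subset (Set.finite_range (N.cutCapacity fmax))
        (by rintro c ⟨U, _, rfl⟩; exact ⟨U, rfl⟩)
    have horig_ne : N.origin ≠ N.destination := by
      intro h
      have hn := N.npos
      have : (N.origin).val = (N.destination).val := by rw [h]
      simp [FlowNetwork.origin, FlowNetwork.destination, Fin.val_last] at this
      omega
    have hUe : N.IsCut (Finset.univ.erase N.destination) :=
      ⟨Finset.mem_erase.2 ⟨horig_ne, Finset.mem_univ _⟩, Finset.notMem_erase _ _⟩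
    have hne : {c | ∃ U, N.IsCut U ∧ c = N.cutCapacity fmax U}.Nonempty :=
      ⟨_, _, hUe, rfl⟩
    obtain ⟨U, hU, hCU⟩ := hne.csInf_mem hfin
    have hub := N.upper_bound hconn htree fmax hfmax f lam0 hf d hd U hU N.origin hU.1
    rw [hf.2.1] at hub
    have hfilter : ∑ g ∈ (N.cutOutLinks U).filter (fun g => N.Reach N.origin (N.src g)), fmax g
        ≤ N.cutCapacity fmax U :=
      Finset.sum_le_sum_of_subset_of_nonneg (Finset.filter_subset _ _)
        (fun e _ _ => (hfmax e).le)
    have h2 : d N.origin + ENNReal.ofReal lam0 ≤ ENNReal.ofReal (N.minCutCapacity fmax) := by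
      have : N.minCutCapacity fmax = N.cutCapacity fmax U := hCU
      rw [this]
      exact hub.trans (ENNReal.ofReal_le_ofReal hfilter)
    have h3 : ENNReal.ofReal (N.minCutCapacity fmax) ≤
        ENNReal.ofReal (N.minCutCapacity fmax - lam0) + ENNReal.ofReal lam0 := by
      have heq : N.minCutCapacity fmax = (N.minCutCapacity fmax - lam0) + lam0 := by ring
      calc ENNReal.ofReal (N.minCutCapacity fmax)
          = ENNReal.ofReal ((N.minCutCapacity fmax - lam0) + lam0) := by rw [← heq]
        _ ≤ _ := ENNReal.ofReal_add_le
    exact (ENNReal.add_le_add_iff_right ENNReal.ofReal_ne_top).1 (h2.trans h3)
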